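/- Let w = (p,q) be exterior K-quasiconformal in ℝ²∖B̄₁(0) with K ≥ 1, and define the Kelvin transforms p̃(x) = p(x/|x|²) and q̃(x) = q(x/|x|²) for x ∈ B₁(0)∖{0}. Then the mapping w̃ = (q̃, p̃) is K-quasiconformal in B₁(0)∖{0}. -/

import Mathlib

open Filter Topology Metric Real

noncomputable section

/-- The plane `ℝ²` with the Euclidean norm. -/
abbrev E2 : Type := EuclideanSpace ℝ (Fin 2)

/-- The `i`-th partial derivative of `f : ℝ² → ℝ` at `x`. -/
def pd (f : E2 → ℝ) (i : Fin 2) (x : E2) : ℝ :=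
  fderiv ℝ f x (EuclideanSpace.single i 1)

/-- The inversion `x ↦ x/|x|²` of the plane. -/
def inv2 (x : E2) : E2 := (‖x‖ ^ 2)⁻¹ • x

lemma hasFDerivAt_inv2 (x : E2) (hx : x ≠ 0) :
    HasFDerivAt inv2
      ((‖x‖ ^ 2)⁻¹ • ContinuousLinearMap.id ℝ E2 +
        (((-((‖x‖ ^ 2) ^ 2)⁻¹) • (2 • (innerSL ℝ x))).smulRight x)) x := by
  have hn : ‖x‖ ≠ 0 := norm_ne_zero_iff.mpr hx
  have hsne : ‖x‖ ^ 2 ≠ 0 := by positivity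
  have hns : HasFDerivAt (fun z : E2 => ‖z‖ ^ 2) (2 • (innerSL ℝ x)) x :=
    (hasStrictFDerivAt_norm_sq x).hasFDerivAt
  have hinv : HasFDerivAt (fun z : E2 => (‖z‖ ^ 2)⁻¹)
      ((-((‖x‖ ^ 2) ^ 2)⁻¹) • (2 • (innerSL ℝ x))) x :=
    (hasDerivAt_inv hsne).comp_hasFDerivAt x hns
  exact hinv.smul (hasFDerivAt_id x)

lemma pd_comp (f : E2 → ℝ) (x : E2) (hx : x ≠ 0)
    (hf : DifferentiableAt ℝ f (inv2 x)) (i : Fin 2) :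
    pd (fun z => f (inv2 z)) i x =
      (‖x‖ ^ 2)⁻¹ * pd f i (inv2 x) -
        2 * ((‖x‖ ^ 2)⁻¹) ^ 2 * x i *
          (x 0 * pd f 0 (inv2 x) + x 1 * pd f 1 (inv2 x)) := by
  have hL := hasFDerivAt_inv2 x hx
  have hc : HasFDerivAt (fun z => f (inv2 z)) ((fderiv ℝ f (inv2 x)).comp _) x :=
    hf.hasFDerivAt.comp x hL
  have hxd : x = x 0 • EuclideanSpace.single 0 (1:ℝ) + x 1 • EuclideanSpace.single 1 (1:ℝ) := by
    ext j
    fin_cases j <;> simp [EuclideanSpace.single_apply]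
  unfold pd
  rw [hc.fderiv]
  rw [ContinuousLinearMap.comp_apply]
  simp only [ContinuousLinearMap.add_apply, ContinuousLinearMap.smul_apply,
    ContinuousLinearMap.id_apply, ContinuousLinearMap.smulRight_apply,
    ContinuousLinearMap.smul_apply, innerSL_apply_apply, map_add, map_smul]
  have hφx : (fderiv ℝ f (inv2 x)) x =
      x 0 * pd f 0 (inv2 x) + x 1 * pd f 1 (inv2 x) := by
    have h1 : (fderiv ℝ f (inv2 x)) x =
        (fderiv ℝ f (inv2 x)) (x 0 • EuclideanSpace.single 0 (1:ℝ) +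
          x 1 • EuclideanSpace.single 1 (1:ℝ)) := by rw [← hxd]
    rw [h1]
    simp [pd, map_add, map_smul]
  rw [real_inner_comm, EuclideanSpace.inner_single_left, hφx]
  simp only [pd, smul_eq_mul, map_one, RCLike.star_def, conj_trivial]
  ring

/-- If `w = (p,q)` is exterior `K`-quasiconformal in `ℝ² ∖ B̄₁(0)` and
`p̃, q̃` are the Kelvin transforms of `p, q`, then `w̃ = (q̃, p̃)` is
`K`-quasiconformal in `B₁(0) ∖ {0}`. -/
theorem stmt2 (K : ℝ) (hK : 1 ≤ K) (p q : E2 → ℝ)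
    (hp : ContDiffOn ℝ 1 p {x : E2 | 1 < ‖x‖}) (hq : ContDiffOn ℝ 1 q {x : E2 | 1 < ‖x‖})
    (hqc : ∀ x : E2, 1 < ‖x‖ →
      pd p 0 x ^ 2 + pd p 1 x ^ 2 + pd q 0 x ^ 2 + pd q 1 x ^ 2 ≤
        2 * K * (pd p 0 x * pd q 1 x - pd p 1 x * pd q 0 x)) :
    ∀ x ∈ Metric.ball (0 : E2) 1 \ {0},
      pd (fun y => q (inv2 y)) 0 x ^ 2 + pd (fun y => q (inv2 y)) 1 x ^ 2 +
          pd (fun y => p (inv2 y)) 0 x ^ 2 + pd (fun y => p (inv2 y)) 1 x ^ 2 ≤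
        2 * K * (pd (fun y => q (inv2 y)) 0 x * pd (fun y => p (inv2 y)) 1 x -
          pd (fun y => q (inv2 y)) 1 x * pd (fun y => p (inv2 y)) 0 x) := by
  rintro x ⟨hxb, hx0⟩
  simp only [Metric.mem_ball, dist_zero_right] at hxb
  replace hx0 : x ≠ 0 := hx0
  have hnpos : 0 < ‖x‖ := norm_pos_iff.mpr hx0
  have hn : ‖x‖ ≠ 0 := hnpos.ne'
  have hy : 1 < ‖inv2 x‖ := by
    have : ‖inv2 x‖ = ‖x‖⁻¹ := by
      rw [inv2, norm_smul]
      rw [norm_inv, norm_pow, norm_norm]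
      field_simp
    rw [this]
    exact (one_lt_inv₀ hnpos).mpr hxb
  have ho : IsOpen {z : E2 | 1 < ‖z‖} := isOpen_lt continuous_const continuous_norm
  have hdp : DifferentiableAt ℝ p (inv2 x) :=
    (hp.contDiffAt (ho.mem_nhds hy)).differentiableAt one_ne_zero
  have hdq : DifferentiableAt ℝ q (inv2 x) :=
    (hq.contDiffAt (ho.mem_nhds hy)).differentiableAt one_ne_zero
  have hnorm : ‖x‖ ^ 2 = x 0 ^ 2 + x 1 ^ 2 := by
    rw [EuclideanSpace.norm_eq, Real.sq_sqrt (by positivity)]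
    simp [Fin.sum_univ_two, sq_abs]
  set u := x 0 with hu
  set v := x 1 with hv
  have hne : u ^ 2 + v ^ 2 ≠ 0 := by rw [← hnorm]; positivity
  set a := pd p 0 (inv2 x) with ha
  set b := pd p 1 (inv2 x) with hb
  set c := pd q 0 (inv2 x) with hc
  set d := pd q 1 (inv2 x) with hd
  have ep0 := pd_comp p x hx0 hdp 0
  have ep1 := pd_comp p x hx0 hdp 1
  have eq0 := pd_comp q x hx0 hdq 0
  have eq1 := pd_comp q x hx0 hdq 1
  rw [hnorm] at ep0 ep1 eq0 eq1
  rw [ep0, ep1, eq0, eq1, ← ha, ← hb, ← hc, ← hd, ← hu, ← hv]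
  set t := (u ^ 2 + v ^ 2)⁻¹ with hts
  have h := hqc (inv2 x) hy
  rw [← ha, ← hb, ← hc, ← hd] at h
  have eL : (t * c - 2 * t ^ 2 * u * (u * c + v * d)) ^ 2 +
      (t * d - 2 * t ^ 2 * v * (u * c + v * d)) ^ 2 +
      ((t * a - 2 * t ^ 2 * u * (u * a + v * b)) ^ 2 +
      (t * b - 2 * t ^ 2 * v * (u * a + v * b)) ^ 2) =
      t ^ 2 * (a ^ 2 + b ^ 2 + c ^ 2 + d ^ 2) := by
    rw [hts]; field_simp; ring
  have eR : (t * c - 2 * t ^ 2 * u * (u * c + v * d)) *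
        (t * b - 2 * t ^ 2 * v * (u * a + v * b)) -
      (t * d - 2 * t ^ 2 * v * (u * c + v * d)) *
        (t * a - 2 * t ^ 2 * u * (u * a + v * b)) =
      t ^ 2 * (a * d - b * c) := by
    rw [hts]; field_simp; ring
  calc (t * c - 2 * t ^ 2 * u * (u * c + v * d)) ^ 2 +
      (t * d - 2 * t ^ 2 * v * (u * c + v * d)) ^ 2 +
      (t * a - 2 * t ^ 2 * u * (u * a + v * b)) ^ 2 +
      (t * b - 2 * t ^ 2 * v * (u * a + v * b)) ^ 2
      = t ^ 2 * (a ^ 2 + b ^ 2 + c ^ 2 + d ^ 2) := by rw [← eL]; ring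
    _ ≤ t ^ 2 * (2 * K * (a * d - b * c)) :=
        mul_le_mul_of_nonneg_left h (sq_nonneg t)
    _ = 2 * K * (t ^ 2 * (a * d - b * c)) := by ring
    _ = 2 * K * ((t * c - 2 * t ^ 2 * u * (u * c + v * d)) *
          (t * b - 2 * t ^ 2 * v * (u * a + v * b)) -
        (t * d - 2 * t ^ 2 * v * (u * c + v * d)) *
          (t * a - 2 * t ^ 2 * u * (u * a + v * b))) := by rw [eR]
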